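/- arXiv:1808.09387 — 2 statements merged into one kernel-verified Lean document; each statement's English description precedes it below -/
import Mathlib

section
/- No shortest path graph contains K₄ minus an edge as an induced subgraph. That is, if H = S(G,a,b) is a shortest path graph, then H has no induced subgraph isomorphic to the graph on four vertices with five edges. -/
open SimpleGraph

variable {V : Type*}

/-- An `(a,b)`-geodesic in `G`: a shortest path from `a` to `b`. -/
def Geodesic (G : SimpleGraph V) (a b : V) : Type _ :=
  {p : G.Walk a b // p.IsPath ∧ p.length = G.dist a b}

/-- The set of index levels at which two geodesics differ
(position `i` in the support list is index level `i`; position `0` is `a`). -/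
def diffIndices (G : SimpleGraph V) (a b : V) (U W : Geodesic G a b) : Set ℕ :=
  {i | U.1.support[i]? ≠ W.1.support[i]?}

/-- The shortest path graph `S(G,a,b)`: vertices are the `(a,b)`-geodesics,
two geodesics being adjacent iff they differ at exactly one index level. -/
def SPG (G : SimpleGraph V) (a b : V) : SimpleGraph (Geodesic G a b) where
  Adj U W := ∃! i, i ∈ diffIndices G a b U W
  symm := by
    constructor
    rintro U W ⟨i, hi, hu⟩
    exact ⟨i, Ne.symm hi, fun j hj => hu j (Ne.symm hj)⟩
  loopless := by
    constructor
    rintro U ⟨i, hi, -⟩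
    exact hi rfl

lemma walk_support_inj {G : SimpleGraph V} {a b : V} :
    ∀ (p q : G.Walk a b), p.support = q.support → p = q := by
  intro p
  induction p with
  | nil =>
    intro q hq
    cases q with
    | nil => rfl
    | cons h q =>
      rw [Walk.support_nil, Walk.support_cons, q.support_eq_cons] at hq
      simp at hq
  | cons h p ih =>
    intro q hq
    cases q with
    | nil =>
      rw [Walk.support_nil, Walk.support_cons, p.support_eq_cons] at hq
      simp at hq
    | cons h' q =>
      simp only [Walk.support_cons, List.cons.injEq] at hq
      obtain ⟨-, hq⟩ := hq
      have heq : _ = _ := (Walk.support_eq_cons p).symm.trans (hq.trans (Walk.support_eq_cons q))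
      obtain ⟨rfl⟩ : _ = _ := List.head_eq_of_cons_eq heq
      rw [ih q hq]

lemma geo_ext {G : SimpleGraph V} {a b : V} {U W : Geodesic G a b}
    (h : ∀ t : ℕ, U.1.support[t]? = W.1.support[t]?) : U = W :=
  Subtype.ext (walk_support_inj _ _ (List.ext_getElem? h))

/-- shortest path graphs are `K₄ - e`-free. -/
theorem stmt_1 {V : Type*} (G : SimpleGraph V) (a b : V) (hab : a ≠ b) :
    IsEmpty (((completeGraph (Fin 4)).deleteEdges {s(0, 1)}) ↪g SPG G a b) := by
  constructor
  intro f
  -- adjacency transfer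
  have hA : ∀ {u v : Fin 4}, u ≠ v → s(u, v) ≠ s((0 : Fin 4), 1) →
      (SPG G a b).Adj (f u) (f v) := by
    intro u v huv he
    exact f.map_adj_iff.mpr (by rw [deleteEdges_adj]; exact ⟨huv, he⟩)
  have hnadj : ¬ (SPG G a b).Adj (f 0) (f 1) := by
    intro h
    have := f.map_adj_iff.mp h
    rw [deleteEdges_adj] at this
    exact this.2 rfl
  set x := f 0 with hx
  set y := f 1 with hy
  set z := f 2 with hz
  set w := f 3 with hw
  have hxy : x ≠ y := fun h => by simpa using f.injective h
  have hzw : z ≠ w := fun h => by simpa using f.injective h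
  obtain ⟨i, d02, u02⟩ := hA (show (0:Fin 4) ≠ 2 by decide) (by decide)
  obtain ⟨j, d12, u12⟩ := hA (show (1:Fin 4) ≠ 2 by decide) (by decide)
  obtain ⟨k, d03, u03⟩ := hA (show (0:Fin 4) ≠ 3 by decide) (by decide)
  obtain ⟨l, d13, u13⟩ := hA (show (1:Fin 4) ≠ 3 by decide) (by decide)
  obtain ⟨m, d23, u23⟩ := hA (show (2:Fin 4) ≠ 3 by decide) (by decide)
  -- agreement off the unique diff index
  have e02 : ∀ t, t ≠ i → x.1.support[t]? = z.1.support[t]? :=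
    fun t ht => by by_contra h; exact ht (u02 t h)
  have e12 : ∀ t, t ≠ j → y.1.support[t]? = z.1.support[t]? :=
    fun t ht => by by_contra h; exact ht (u12 t h)
  have e03 : ∀ t, t ≠ k → x.1.support[t]? = w.1.support[t]? :=
    fun t ht => by by_contra h; exact ht (u03 t h)
  have e13 : ∀ t, t ≠ l → y.1.support[t]? = w.1.support[t]? :=
    fun t ht => by by_contra h; exact ht (u13 t h)
  -- if two common neighbours' diff indices coincide, x ~ y : contradiction
  have key : ∀ (Z : Geodesic G a b) (i' j' : ℕ), (x.1.support[i']? ≠ Z.1.support[i']?) →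
      (∀ t : ℕ, t ≠ i' → x.1.support[t]? = Z.1.support[t]?) →
      (∀ t : ℕ, t ≠ j' → y.1.support[t]? = Z.1.support[t]?) → i' ≠ j' := by
    intro Z i' j' d02' e02' e12' h
    subst h
    have hag : ∀ t, t ≠ i' → x.1.support[t]? = y.1.support[t]? :=
      fun t ht => (e02' t ht).trans (e12' t ht).symm
    have hdi : x.1.support[i']? ≠ y.1.support[i']? := by
      intro he
      exact hxy (geo_ext fun t => by
        by_cases ht : t = i'
        · exact ht ▸ he
        · exact hag t ht)
    exact hnadj ⟨i', hdi, fun t htne => by_contra fun hne => htne (hag t hne)⟩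
  have hij : i ≠ j := key z i j d02 e02 e12
  have hkl : k ≠ l := key w k l d03 e03 e13
  -- x and y differ exactly at i and j
  have dxyi : x.1.support[i]? ≠ y.1.support[i]? :=
    fun h => d02 (h.trans (e12 i hij))
  have dxyj : x.1.support[j]? ≠ y.1.support[j]? :=
    fun h => d12 (((e02 j (Ne.symm hij)).symm.trans h).symm)
  have exy : ∀ t, t ≠ i → t ≠ j → x.1.support[t]? = y.1.support[t]? :=
    fun t h1 h2 => (e02 t h1).trans (e12 t h2).symm
  -- k ∈ {i, j}
  have dxyk : x.1.support[k]? ≠ y.1.support[k]? :=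
    fun h => d03 (h.trans (e13 k hkl))
  have dxyl : x.1.support[l]? ≠ y.1.support[l]? :=
    fun h => d13 (((e03 l (Ne.symm hkl)).symm.trans h).symm)
  have hk : k = i ∨ k = j := by
    by_contra h
    push_neg at h
    exact dxyk (exy k h.1 h.2)
  have hl : l = i ∨ l = j := by
    by_contra h
    push_neg at h
    exact dxyl (exy l h.1 h.2)
  rcases hk with hki | hkj
  · have hlj : l = j := hl.resolve_left (fun h => hkl (hki.trans h.symm))
    refine hzw (geo_ext fun t => ?_)
    by_cases h1 : t = i
    · rw [h1]
      exact (e12 i hij).symm.trans (e13 i (by rw [hlj]; exact hij))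
    · by_cases h2 : t = j
      · rw [h2]
        exact (e02 j (Ne.symm hij)).symm.trans (e03 j (by rw [hki]; exact Ne.symm hij))
      · exact (e02 t h1).symm.trans (e03 t (by rw [hki]; exact h1))
  · have hli : l = i := hl.resolve_right (fun h => hkl (hkj.trans h.symm))
    have dzwi : z.1.support[i]? ≠ w.1.support[i]? := by
      intro h
      apply dxyi
      have h1 := e12 i hij
      have h2 := e03 i (by rw [hkj]; exact hij)
      exact h2.trans (h.symm.trans h1.symm)
    have dzwj : z.1.support[j]? ≠ w.1.support[j]? := by
      intro h
      apply dxyj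
      exact (e02 j (Ne.symm hij)).trans (h.trans (e13 j (by rw [hli]; exact Ne.symm hij)).symm)
    exact hij ((u23 i dzwi).trans (u23 j dzwj).symm)
end

section
/- No shortest path graph contains the complete bipartite graph K_{2,3} as an induced subgraph. -/
open SimpleGraph

variable {V : Type*}

lemma walk_eq_of_support_eq {G : SimpleGraph V} :
    ∀ {a b : V} (p q : G.Walk a b), p.support = q.support → p = q := by
  intro a b p
  induction p with
  | nil => intro q h; cases q with
    | nil => rfl
    | cons h' q' => simp [Walk.support_cons] at h
  | cons hadj p' ih =>
      intro q h
      cases q with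
      | nil => simp [Walk.support_cons] at h
      | cons h' q' =>
          simp only [Walk.support_cons, List.cons.injEq, true_and] at h
          have hc : _ = _ := congrArg List.head? h
          rw [Walk.support_eq_cons p', Walk.support_eq_cons q'] at hc
          simp only [List.head?_cons, Option.some.injEq] at hc
          subst hc
          rw [ih q' h]

lemma diff_nonempty {G : SimpleGraph V} {a b : V} {X Y : Geodesic G a b}
    (h : X ≠ Y) : ∃ i, i ∈ diffIndices G a b X Y := by
  by_contra hc
  push_neg at hc
  simp only [diffIndices, Set.mem_setOf_eq, not_ne_iff] at hc
  apply h
  apply Subtype.ext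
  exact walk_eq_of_support_eq _ _ (List.ext_getElem? hc)

/-- two distinct indices in the difference set of distinct nonadjacent geodesics -/
lemma two_diff {G : SimpleGraph V} {a b : V} {X Y : Geodesic G a b}
    (hne : X ≠ Y) (hnadj : ¬ (SPG G a b).Adj X Y) :
    ∃ i j, i ≠ j ∧ i ∈ diffIndices G a b X Y ∧ j ∈ diffIndices G a b X Y := by
  obtain ⟨i, hi⟩ := diff_nonempty hne
  by_contra hc
  push_neg at hc
  refine hnadj ⟨i, hi, fun j hj => ?_⟩
  by_contra hji
  exact (hc j i (Ne.symm (hji ∘ Eq.symm)) hj) hi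

lemma diff_subset_pair {G : SimpleGraph V} {a b : V} {X Y Z : Geodesic G a b}
    {r s : ℕ} (hXZ : ∀ j ∈ diffIndices G a b X Z, j = r)
    (hZY : ∀ j ∈ diffIndices G a b Z Y, j = s) :
    ∀ j ∈ diffIndices G a b X Y, j = r ∨ j = s := by
  intro j hj
  by_contra hc
  push_neg at hc
  have h1 : X.1.support[j]? = Z.1.support[j]? := by
    by_contra h; exact hc.1 (hXZ j h)
  have h2 : Z.1.support[j]? = Y.1.support[j]? := by
    by_contra h; exact hc.2 (hZY j h)
  exact hj (h1.trans h2)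

/-- shortest path graphs are `K_{2,3}`-free. -/
theorem stmt_5 {V : Type*} (G : SimpleGraph V) (a b : V) (hab : a ≠ b) :
    IsEmpty (completeBipartiteGraph (Fin 2) (Fin 3) ↪g SPG G a b) := by
  constructor
  intro f
  set u : Fin 2 → Geodesic G a b := fun j => f (Sum.inl j) with hu
  set w : Fin 3 → Geodesic G a b := fun k => f (Sum.inr k) with hw
  -- adjacency facts
  have hadj : ∀ j k, (SPG G a b).Adj (u j) (w k) := by
    intro j k
    rw [hu, hw, f.map_adj_iff]
    simp [completeBipartiteGraph]
  have hunadj : ¬ (SPG G a b).Adj (u 0) (u 1) := by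
    rw [hu, f.map_adj_iff]; simp [completeBipartiteGraph]
  have hwnadj : ∀ k l, k ≠ l → ¬ (SPG G a b).Adj (w k) (w l) := by
    intro k l _
    rw [hw, f.map_adj_iff]; simp [completeBipartiteGraph]
  have hune : u 0 ≠ u 1 := fun h => by
    have := f.injective h; simp at this
  have hwne : ∀ k l, k ≠ l → w k ≠ w l := fun k l hkl h => by
    have := f.injective h; simp at this; exact hkl this
  -- extract diff indices
  choose x hx hux using fun k => hadj 0 k
  choose y hy huy using fun k => hadj 1 k
  -- symmetric versions: diff (w k) (u j) unique index
  have hux' : ∀ k, ∀ j ∈ diffIndices G a b (w k) (u 0), j = x k := by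
    intro k j hj
    exact hux k j (Ne.symm hj)
  have huy' : ∀ k, ∀ j ∈ diffIndices G a b (w k) (u 1), j = y k := by
    intro k j hj
    exact huy k j (Ne.symm hj)
  -- x's pairwise distinct
  have hxne : ∀ k l, k ≠ l → x k ≠ x l := by
    intro k l hkl
    obtain ⟨i, j, hij, hi, hj⟩ := two_diff (hwne k l hkl) (hwnadj k l hkl)
    have hsub := diff_subset_pair (X := w k) (Y := w l) (Z := u 0)
      (hux' k) (hux l)
    have h1 := hsub i hi
    have h2 := hsub j hj
    intro heq
    rw [heq] at h1 h2
    omega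
  -- from u0,u1: each x k in {i,j}
  obtain ⟨i, j, hij, hi, hj⟩ := two_diff hune hunadj
  have hxij : ∀ k, x k = i ∨ x k = j := by
    intro k
    have hsub := diff_subset_pair (X := u 0) (Y := u 1) (Z := w k)
      (hux k) (huy' k)
    have h1 := hsub i hi
    have h2 := hsub j hj
    -- {i,j} ⊆ {x k, y k}, i ≠ j, so x k ∈ {i, j}
    by_contra hc
    push_neg at hc
    rcases h1 with h1 | h1 <;> rcases h2 with h2 | h2 <;> omega
  have h01 := hxne 0 1 (by decide)
  have h02 := hxne 0 2 (by decide)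
  have h12 := hxne 1 2 (by decide)
  rcases hxij 0 with h0 | h0 <;> rcases hxij 1 with h1 | h1 <;>
    rcases hxij 2 with h2 | h2 <;> omega
end
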